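/- Let V, W be affine varieties in ℂ^n with V irreducible of dimension d, and let π : ℂ^n → ℂ^d be the projection onto d fixed coordinates. If π(V ∩ W) contains a non-empty Euclidean open subset of ℂ^d, then V ⊆ W. -/

import Mathlib

set_option maxHeartbeats 2000000
set_option synthInstance.maxHeartbeats 1000000

open MvPolynomial in
private lemma aux_line_eval {d : ℕ} (a z : Fin d → ℂ) (q : MvPolynomial (Fin d) ℂ) (t : ℂ) :
    Polynomial.eval t
      (MvPolynomial.aeval (fun i => Polynomial.C (a i) + Polynomial.C (z i - a i) * Polynomial.X) q)
      = MvPolynomial.eval (fun i => a i + t * (z i - a i)) q := by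
  induction q using MvPolynomial.induction_on with
  | C c => simp
  | add p r hp hr => simp only [map_add, Polynomial.eval_add, hp, hr]
  | mul_X p i hp =>
      simp only [map_mul, MvPolynomial.aeval_X, Polynomial.eval_mul, Polynomial.eval_add,
        Polynomial.eval_C, Polynomial.eval_X, MvPolynomial.eval_mul, MvPolynomial.eval_X, hp]
      ring

open MvPolynomial in
lemma aux_eval_zero_on_open {d : ℕ} {q : MvPolynomial (Fin d) ℂ}
    {O : Set (Fin d → ℂ)} (hO : IsOpen O) (hne : O.Nonempty)
    (h : ∀ y ∈ O, MvPolynomial.eval y q = 0) : q = 0 := by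
  by_contra hq
  obtain ⟨z, hz⟩ : ∃ z : Fin d → ℂ, MvPolynomial.eval z q ≠ 0 := by
    by_contra h'
    push_neg at h'
    exact hq (MvPolynomial.funext fun x => by simp [h' x])
  obtain ⟨a, ha⟩ := hne
  set L : ℂ → (Fin d → ℂ) := fun t i => a i + t * (z i - a i) with hL
  have hLc : Continuous L := by
    apply continuous_pi
    intro i
    fun_prop
  have hL0 : L 0 = a := by ext i; simp [hL]
  have hpre : IsOpen (L ⁻¹' O) := hO.preimage hLc
  have h0mem : (0 : ℂ) ∈ L ⁻¹' O := by simp [hL0, ha]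
  obtain ⟨δ, hδpos, hδ⟩ := Metric.isOpen_iff.1 hpre 0 h0mem
  set P : Polynomial ℂ :=
    MvPolynomial.aeval (fun i => Polynomial.C (a i) + Polynomial.C (z i - a i) * Polynomial.X) q
    with hP
  have key : ∀ t : ℂ, P.eval t = MvPolynomial.eval (L t) q := fun t => aux_line_eval a z q t
  have hanti : StrictAnti (fun k : ℕ => δ / ((k : ℝ) + 2)) := by
    intro k m hkm
    apply div_lt_div_of_pos_left hδpos (by positivity)
    exact_mod_cast by linarith
  have hroots : {t : ℂ | P.IsRoot t}.Infinite := by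
    apply Set.infinite_of_injective_forall_mem
      (f := fun k : ℕ => ((δ / ((k : ℝ) + 2) : ℝ) : ℂ))
    · exact fun k m hkm => hanti.injective (Complex.ofReal_inj.mp (by simpa using hkm))
    · intro k
      have hmem : ((δ / ((k : ℝ) + 2) : ℝ) : ℂ) ∈ Metric.ball (0 : ℂ) δ := by
        simp only [Metric.mem_ball, dist_zero_right, Complex.norm_real]
        rw [Real.norm_eq_abs, abs_of_pos (by positivity), div_lt_iff₀ (by positivity)]
        nlinarith
      have hOm := hδ hmem
      simp only [Set.mem_preimage] at hOm
      show P.IsRoot _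
      rw [Polynomial.IsRoot, key]
      exact h _ hOm
  have hP0 : P = 0 := Polynomial.eq_zero_of_infinite_isRoot P hroots
  apply hz
  have h1 := key 1
  rw [hP0] at h1
  simp only [Polynomial.eval_zero] at h1
  have : L 1 = z := by ext i; simp [hL]
  rw [this] at h1
  exact h1.symm

open MvPolynomial in
/-- In a polynomial ring over an infinite field, given `N` distinguished variables and a nonzero
polynomial `τ`, there is a strictly increasing chain of `N+1` primes avoiding `τ`. -/
private lemma aux_prime_chain {K : Type*} [Field K] [Infinite K] {κ : Type*}
    (N : ℕ) (e : Fin N → κ) (he : Function.Injective e) (τ : MvPolynomial κ K) (hτ : τ ≠ 0) :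
    ∃ P : ℕ → Ideal (MvPolynomial κ K),
      (∀ j, (P j).IsPrime) ∧ (∀ j, j < N → P j < P (j + 1)) ∧ (∀ j, τ ∉ P j) := by
  classical
  obtain ⟨w, hw⟩ : ∃ w : κ → K, MvPolynomial.eval w τ ≠ 0 := by
    by_contra h'
    push_neg at h'
    exact hτ (MvPolynomial.funext fun x => by simp [h' x])
  set g : ℕ → κ → MvPolynomial κ K :=
    fun j i => if ∃ l : Fin N, (l : ℕ) < j ∧ e l = i then C (w i) else X i with hg
  set F : ℕ → (MvPolynomial κ K →ₐ[K] MvPolynomial κ K) := fun j => aeval (g j) with hF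
  have hgval : ∀ j j', j ≤ j' → ∀ i, (F j') (g j i) = g j' i := by
    intro j j' hjj' i
    by_cases hi : ∃ l : Fin N, (l : ℕ) < j ∧ e l = i
    · have hi' : ∃ l : Fin N, (l : ℕ) < j' ∧ e l = i := by
        obtain ⟨l, hl, rfl⟩ := hi
        exact ⟨l, lt_of_lt_of_le hl hjj', rfl⟩
      simp [hg, hF, hi, hi']
    · simp [hg, hF, hi]
  have hcomp : ∀ j j', j ≤ j' → ∀ q, (F j') ((F j) q) = (F j') q := by
    intro j j' hjj' q
    induction q using MvPolynomial.induction_on with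
    | C c => simp [hF]
    | add p r hp hr => simp [map_add, hp, hr]
    | mul_X p i hp =>
        simp only [map_mul, hp]
        congr 1
        have : (F j) (X i) = g j i := by simp [hF]
        rw [this, hgval j j' hjj' i]
        simp [hF]
  have heval : ∀ j q, MvPolynomial.eval w ((F j) q) = MvPolynomial.eval w q := by
    intro j q
    induction q using MvPolynomial.induction_on with
    | C c => simp [hF]
    | add p r hp hr => simp [map_add, hp, hr]
    | mul_X p i hp =>
        simp only [map_mul, hp, MvPolynomial.eval_mul]
        congr 1
        have h1 : (F j) (X i) = g j i := by simp [hF]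
        rw [h1]
        by_cases hi : ∃ l : Fin N, (l : ℕ) < j ∧ e l = i
        · simp [hg, hi]
        · simp [hg, hi]
  refine ⟨fun j => RingHom.ker (F j).toRingHom, fun j => RingHom.ker_isPrime _, ?_, ?_⟩
  · intro j hjN
    have hle : RingHom.ker (F j).toRingHom ≤ RingHom.ker (F (j + 1)).toRingHom := by
      intro q hq
      have hq0 : (F j) q = 0 := hq
      have := hcomp j (j + 1) (Nat.le_succ j) q
      rw [hq0, map_zero] at this
      exact (this.symm : (F (j+1)) q = 0)
    refine lt_of_le_of_ne hle ?_
    intro hEq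
    set l : Fin N := ⟨j, hjN⟩ with hl
    set ξ : MvPolynomial κ K := X (e l) - C (w (e l)) with hξ
    have hmem : ξ ∈ RingHom.ker (F (j + 1)).toRingHom := by
      have hi : ∃ l' : Fin N, (l' : ℕ) < j + 1 ∧ e l' = e l := ⟨l, Nat.lt_succ_self j, rfl⟩
      show (F (j+1)) ξ = 0
      simp only [hξ, map_sub, algHom_C]
      have : (F (j+1)) (X (e l)) = g (j+1) (e l) := by simp [hF]
      rw [this]
      simp [hg, hi, show ∃ l' : Fin N, (l' : ℕ) ≤ j ∧ e l' = e l from ⟨l, le_rfl, rfl⟩]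
    have hnmem : ξ ∉ RingHom.ker (F j).toRingHom := by
      have hi : ¬ ∃ l' : Fin N, (l' : ℕ) < j ∧ e l' = e l := by
        rintro ⟨l', hl', hee⟩
        have : l' = l := he hee
        subst this
        exact absurd hl' (by simp [hl])
      intro hker
      have hker0 : (F j) ξ = 0 := hker
      have hXi : (F j) (X (e l)) = g j (e l) := by simp [hF]
      rw [hξ, map_sub, hXi, algHom_C] at hker0
      have hgj : g j (e l) = X (e l) := by simp [hg, hi]
      rw [hgj] at hker0
      -- evaluate at w updated at (e l)
      have := congrArg (MvPolynomial.eval (Function.update w (e l) (w (e l) + 1))) hker0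
      simp [Function.update_self] at this
    simp only at hEq
    rw [hEq] at hnmem
    exact hnmem hmem
  · intro j hmem
    apply hw
    have h0 : (F j) τ = 0 := hmem
    have := heval j τ
    rw [h0, map_zero] at this
    exact this.symm

private lemma aux_chain_lift {A B : Type*} [CommRing A] [CommRing B] [Algebra A B]
    [Algebra.IsIntegral A B]
    (N : ℕ) (P : ℕ → Ideal A) (hprime : ∀ j, j ≤ N → (P j).IsPrime)
    (hchain : ∀ j, j < N → P j < P (j + 1))
    (h0 : Ideal.comap (algebraMap A B) ⊥ ≤ P 0) :
    ∃ T : ℕ → Ideal B,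
      (∀ j, j ≤ N → (T j).IsPrime ∧ (T j).comap (algebraMap A B) = P j) ∧
      (∀ j, j < N → T j < T (j + 1)) := by
  induction N with
  | zero =>
      haveI := hprime 0 le_rfl
      obtain ⟨Q, hQge, hQp, hQc⟩ :=
        Ideal.exists_ideal_over_prime_of_isIntegral (P 0) ⊥ h0
      refine ⟨fun _ => Q, fun j hj => ?_, fun j hj => absurd hj (Nat.not_lt_zero j)⟩
      interval_cases j
      exact ⟨hQp, hQc⟩
  | succ N ih =>
      obtain ⟨T, hT, hTc⟩ := ih (fun j hj => hprime j (hj.trans (Nat.le_succ N)))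
        (fun j hj => hchain j (hj.trans (Nat.lt_succ_self N)))
      haveI := hprime (N + 1) (le_refl _)
      have hle : (T N).comap (algebraMap A B) ≤ P (N + 1) := by
        rw [(hT N le_rfl).2]
        exact (hchain N (Nat.lt_succ_self N)).le
      obtain ⟨Q, hQge, hQp, hQc⟩ :=
        Ideal.exists_ideal_over_prime_of_isIntegral (P (N + 1)) (T N) hle
      refine ⟨fun j => if j ≤ N then T j else Q, fun j hj => ?_, fun j hj => ?_⟩
      · by_cases hjN : j ≤ N
        · simpa [hjN] using hT j hjN
        · have : j = N + 1 := le_antisymm hj (Nat.succ_le_of_lt (Nat.lt_of_not_le hjN))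
          subst this
          simpa [hjN] using ⟨hQp, hQc⟩
      · by_cases hjN : j < N
        · have h1 : j ≤ N := hjN.le
          have h2 : j + 1 ≤ N := hjN
          simpa [h1, h2] using hTc j hjN
        · have hjN' : j = N := by omega
          have hne : T N ≠ Q := by
            intro hEq
            have h2 := (hT N le_rfl).2
            rw [hEq, hQc] at h2
            exact (hchain N (Nat.lt_succ_self N)).ne h2.symm
          rw [hjN']
          simp only []
          show (if N ≤ N then T N else Q) < (if N + 1 ≤ N then T (N+1) else Q)
          have hif1 : (if N ≤ N then T N else Q) = T N := by simp
          have hif2 : (if N + 1 ≤ N then T (N+1) else Q) = Q := by simp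
          rw [hif1, hif2]
          exact lt_of_le_of_ne hQge hne

open Algebra in
private lemma aux_le_krullDim
    {K R : Type*} [Field K] [Infinite K] [CommRing R] [IsDomain R] [Algebra K R]
    {m : ℕ} (gen : Fin m → R) (hgen : Algebra.adjoin K (Set.range gen) = ⊤)
    {N : ℕ} (z : Fin N → R) (hz : AlgebraicIndependent K z) :
    (N : WithBot (WithTop ℕ)) ≤ ringKrullDim R := by
  classical
  obtain ⟨u, hzu, humax⟩ := exists_maximal_algebraicIndependent (Set.range z) Set.univ
      (Set.subset_univ _) hz.coe_range
  have hu : AlgebraicIndependent K ((↑) : u → R) := humax.prop.1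
  have hbasis : IsTranscendenceBasis K ((↑) : u → R) := by
    refine ⟨hu, fun t ht hst => ?_⟩
    simp only [Subtype.range_coe_subtype, Set.setOf_mem_eq] at *
    exact humax.eq_of_le ⟨ht, Set.subset_univ _⟩ hst
  haveI halg := hbasis.isAlgebraic
  set B := Algebra.adjoin K (Set.range ((↑) : u → R)) with hB
  -- polynomials witnessing algebraicity of the generators over `B`
  have hexF : ∀ i : Fin m, ∃ F : Polynomial B, F ≠ 0 ∧ Polynomial.aeval (gen i) F = 0 :=
    fun i => Algebra.IsAlgebraic.isAlgebraic (gen i)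
  choose F hF0 hFev using hexF
  set s₀ : B := ∏ i : Fin m, (F i).leadingCoeff with hs₀def
  have hlc0 : ∀ i, (F i).leadingCoeff ≠ 0 := fun i => Polynomial.leadingCoeff_ne_zero.2 (hF0 i)
  have hs₀ : s₀ ≠ 0 := Finset.prod_ne_zero_iff.2 (fun i _ => hlc0 i)
  set s₀R : R := (s₀ : R) with hs₀Rdef
  have hs₀R : s₀R ≠ 0 := by
    intro h
    rw [hs₀Rdef] at h
    exact hs₀ (ZeroMemClass.coe_eq_zero.mp h)
  set Bs := Localization.Away s₀ with hBs
  set Rs := Localization.Away s₀R with hRs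
  have hpow : Submonoid.powers s₀ ≤ nonZeroDivisors B :=
    powers_le_nonZeroDivisors_of_noZeroDivisors hs₀
  have hpowR : Submonoid.powers s₀R ≤ nonZeroDivisors R :=
    powers_le_nonZeroDivisors_of_noZeroDivisors hs₀R
  haveI : IsDomain Bs := IsLocalization.isDomain_localization hpow
  haveI : IsDomain Rs := IsLocalization.isDomain_localization hpowR
  set ψ : R →+* Rs := algebraMap R Rs with hψdef
  have hψinj : Function.Injective ψ := IsLocalization.injective Rs hpowR
  have hψunit : IsUnit (ψ s₀R) := IsLocalization.Away.algebraMap_isUnit s₀R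
  set gBR : B →+* Rs := ψ.comp (algebraMap B R) with hgBRdef
  have halgBR : ∀ b : B, algebraMap B R b = (b : R) := fun b => rfl
  have hgBRunit : IsUnit (gBR s₀) := by
    have : gBR s₀ = ψ s₀R := by simp [hgBRdef, halgBR, hs₀Rdef]
    rw [this]; exact hψunit
  set f : Bs →+* Rs := IsLocalization.Away.lift (S := Bs) s₀ hgBRunit with hfdef
  have hf : ∀ b : B, f (algebraMap B Bs b) = ψ (b : R) := fun b =>
    IsLocalization.Away.lift_eq (S := Bs) s₀ hgBRunit b
  have hBBsinj : Function.Injective (algebraMap B Bs) := IsLocalization.injective Bs hpow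
  -- f is injective
  have hfinj : Function.Injective f := by
    have hker : ∀ b : Bs, f b = 0 → b = 0 := by
      intro b hb
      obtain ⟨⟨b₀, sm⟩, hsurj⟩ := IsLocalization.surj (Submonoid.powers s₀) b
      have h1 : f (b * algebraMap B Bs sm) = f (algebraMap B Bs b₀) := by rw [hsurj]
      rw [map_mul, hb, zero_mul] at h1
      have h2 : ψ (b₀ : R) = 0 := by rw [← hf b₀, ← h1]
      have h3 : (b₀ : R) = 0 := hψinj (h2.trans (map_zero ψ).symm)
      have hb₀ : b₀ = 0 := ZeroMemClass.coe_eq_zero.mp h3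
      rw [hb₀, map_zero] at hsurj
      have hunit : IsUnit (algebraMap B Bs (sm : B)) := IsLocalization.map_units Bs sm
      rcases hunit with ⟨v, hv⟩
      have : b * v = 0 := by rw [hv]; exact hsurj
      calc b = b * v * (↑v⁻¹) := by rw [mul_assoc]; simp
      _ = 0 := by rw [this, zero_mul]
    intro a b hab
    have h := hker (a - b) (by rw [map_sub, hab, sub_self])
    exact sub_eq_zero.mp h
  letI : Algebra Bs Rs := f.toAlgebra
  have halgBsRs : algebraMap Bs Rs = f := rfl
  -- integrality of Rs over Bs
  haveI hint : Algebra.IsIntegral Bs Rs := by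
    rw [Algebra.isIntegral_def]
    have main : ∀ r : R, IsIntegral Bs (ψ r) := by
      have hBint : ∀ b : B, IsIntegral Bs (ψ (b : R)) := by
        intro b
        rw [← hf b, ← halgBsRs]
        exact isIntegral_algebraMap
      let A : Subalgebra K R :=
        { carrier := {r : R | IsIntegral Bs (ψ r)}
          mul_mem' := fun {a b} ha hb => by
            show IsIntegral Bs (ψ (a * b))
            rw [map_mul]
            exact IsIntegral.mul ha hb
          one_mem' := by
            show IsIntegral Bs (ψ 1)
            rw [map_one]
            exact isIntegral_one
          add_mem' := fun {a b} ha hb => by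
            show IsIntegral Bs (ψ (a + b))
            rw [map_add]
            exact IsIntegral.add ha hb
          zero_mem' := by
            show IsIntegral Bs (ψ 0)
            rw [map_zero]
            exact isIntegral_zero
          algebraMap_mem' := fun k => by
            have hk : algebraMap K R k ∈ B := B.algebraMap_mem k
            have : ψ (algebraMap K R k) = ψ ((⟨algebraMap K R k, hk⟩ : B) : R) := rfl
            show IsIntegral Bs (ψ (algebraMap K R k))
            rw [this]
            exact hBint _ }
      have hgenA : ∀ i, gen i ∈ A := by
        intro i
        -- gen i is integral over Bs via F i with invertible leading coefficient
        have hdvd : (F i).leadingCoeff ∣ s₀ := Finset.dvd_prod_of_mem _ (Finset.mem_univ i)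
        have hUlc : IsUnit (algebraMap B Bs (F i).leadingCoeff) :=
          IsLocalization.Away.isUnit_of_dvd (S := Bs) (x := s₀) hdvd
        set G : Polynomial Bs := (F i).map (algebraMap B Bs) with hGdef
        have hGlc : G.leadingCoeff = algebraMap B Bs (F i).leadingCoeff :=
          Polynomial.leadingCoeff_map_of_injective hBBsinj (F i)
        rcases hUlc with ⟨v, hv⟩
        set P : Polynomial Bs := G * Polynomial.C ((↑v⁻¹ : Bs)) with hPdef
        have hPmonic : P.Monic := by
          have hne : G.leadingCoeff * (Polynomial.C ((↑v⁻¹ : Bs))).leadingCoeff ≠ 0 := by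
            rw [Polynomial.leadingCoeff_C, hGlc, ← hv]
            simp
          have := Polynomial.leadingCoeff_mul' hne
          rw [Polynomial.Monic, hPdef, this, Polynomial.leadingCoeff_C, hGlc, ← hv]
          simp
        have hPev : Polynomial.aeval (ψ (gen i)) P = 0 := by
          have hcomp : f.comp (algebraMap B Bs) = gBR :=
            IsLocalization.Away.lift_comp (S := Bs) s₀ hgBRunit
          have hGev : Polynomial.aeval (ψ (gen i)) G = ψ (Polynomial.aeval (gen i) (F i)) := by
            rw [Polynomial.aeval_def, Polynomial.aeval_def, hGdef, Polynomial.eval₂_map,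
              halgBsRs, hcomp, hgBRdef, Polynomial.hom_eval₂]
          rw [hPdef, map_mul, hGev, hFev i, map_zero, zero_mul]
        exact ⟨P, hPmonic, by rw [← Polynomial.aeval_def]; exact hPev⟩
      have hA : ∀ r : R, r ∈ A := by
        intro r
        have hle : Algebra.adjoin K (Set.range gen) ≤ A :=
          Algebra.adjoin_le (by rintro _ ⟨i, rfl⟩; exact hgenA i)
        rw [hgen] at hle
        exact hle trivial
      exact fun r => hA r
    intro x
    obtain ⟨⟨r, sm⟩, hsurj⟩ := IsLocalization.surj (Submonoid.powers s₀R) x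
    obtain ⟨k, hk⟩ := sm.2
    have hsunit : IsUnit (algebraMap B Bs s₀) := IsLocalization.Away.algebraMap_isUnit s₀
    rcases hsunit with ⟨U, hU⟩
    have hfU : f ((U : Bs)) = ψ s₀R := by
      rw [hU, hf s₀]
    have h1 : x * ψ (sm : R) = ψ r := hsurj
    have h2 : ψ (sm : R) = f ((↑(U ^ k) : Bs)) := by
      rw [← hk, map_pow, ← hfU, ← map_pow, ← Units.val_pow_eq_pow_val]
    have h3 : f ((↑(U ^ k) : Bs)) * f ((↑(U⁻¹ ^ k) : Bs)) = 1 := by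
      rw [← map_mul, ← Units.val_mul, ← mul_pow]
      simp
    have h4 : (x * ψ (sm : R)) * f ((↑(U⁻¹ ^ k) : Bs)) = ψ r * f ((↑(U⁻¹ ^ k) : Bs)) := by
      rw [h1]
    rw [mul_assoc, h2, h3, mul_one] at h4
    rw [h4]
    exact (main r).mul (halgBsRs ▸ isIntegral_algebraMap)
  -- the chain of primes in the polynomial ring
  set e : Fin N → u := fun l => ⟨z l, hzu ⟨l, rfl⟩⟩ with hedef
  have he : Function.Injective e := by
    intro l l' h
    exact hz.injective (by simpa [hedef, Subtype.ext_iff] using h)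
  set eB : MvPolynomial u K ≃+* B := hu.aevalEquiv.toRingEquiv with heBdef
  set τ : MvPolynomial u K := eB.symm s₀ with hτdef
  have hτ : τ ≠ 0 := by
    intro h
    apply hs₀
    have := congrArg eB h
    simpa [hτdef] using this
  obtain ⟨P, hPprime, hPchain, hPne⟩ := aux_prime_chain N e he τ hτ
  -- transport to B
  set Q : ℕ → Ideal B := fun j => Ideal.comap (eB.symm : B →+* MvPolynomial u K) (P j) with hQdef
  have hQprime : ∀ j, (Q j).IsPrime := fun j => (hPprime j).comap _
  have hQmem : ∀ (j) (b : B), b ∈ Q j ↔ eB.symm b ∈ P j := fun j b => Iff.rfl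
  have hQchain : ∀ j, j < N → Q j < Q (j + 1) := by
    intro j hj
    have h1 : Q j ≤ Q (j + 1) := Ideal.comap_mono (hPchain j hj).le
    obtain ⟨ξ, hξ1, hξ2⟩ := SetLike.exists_of_lt (hPchain j hj)
    refine lt_of_le_of_ne h1 ?_
    intro hEq
    have hmem : eB ξ ∈ Q (j + 1) := by rw [hQmem]; simpa using hξ1
    rw [← hEq] at hmem
    rw [hQmem] at hmem
    simp at hmem
    exact hξ2 hmem
  have hQs₀ : ∀ j, s₀ ∉ Q j := by
    intro j h
    rw [hQmem] at h
    exact hPne j (by rwa [← hτdef] at h)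
  -- transport to Bs via the localization order isomorphism
  set oiso := IsLocalization.orderIsoOfPrime (Submonoid.powers s₀) Bs with hoiso
  have hdisj : ∀ j, Disjoint ((Submonoid.powers s₀ : Submonoid B) : Set B) ((Q j : Ideal B) : Set B) := by
    intro j
    rw [Set.disjoint_left]
    rintro x ⟨k, rfl⟩ hx
    exact hQs₀ j ((hQprime j).mem_of_pow_mem k hx)
  set Qs : ℕ → Ideal Bs := fun j => (oiso.symm ⟨Q j, hQprime j, hdisj j⟩ : _).1 with hQsdef
  have hQsprime : ∀ j, (Qs j).IsPrime := fun j => (oiso.symm ⟨Q j, hQprime j, hdisj j⟩).2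
  have hQschain : ∀ j, j < N → Qs j < Qs (j + 1) := by
    intro j hj
    have h := oiso.symm.lt_iff_lt.2
      (show (⟨Q j, hQprime j, hdisj j⟩ :
          {p : Ideal B // p.IsPrime ∧
            Disjoint ((Submonoid.powers s₀ : Submonoid B) : Set B) (p : Set B)}) <
          ⟨Q (j + 1), hQprime (j + 1), hdisj (j + 1)⟩
        from Subtype.mk_lt_mk.2 (hQchain j hj))
    exact Subtype.coe_lt_coe.2 h
  -- lift to Rs via going-up
  have h0 : Ideal.comap (algebraMap Bs Rs) ⊥ ≤ Qs 0 :=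
    (halgBsRs ▸ Ideal.comap_bot_le_of_injective _ hfinj)
  obtain ⟨T, hT, hTc⟩ := aux_chain_lift N Qs (fun j _ => hQsprime j) hQschain h0
  -- comap to R
  set Cc : ℕ → Ideal R := fun j => (T j).comap ψ with hCcdef
  have hCcprime : ∀ j, j ≤ N → (Cc j).IsPrime := fun j hj =>
    haveI := (hT j hj).1
    Ideal.IsPrime.comap _
  set oisoR := IsLocalization.orderIsoOfPrime (Submonoid.powers s₀R) Rs with hoisoR
  have hCcchain : ∀ j, j < N → Cc j < Cc (j + 1) := by
    intro j hj
    have h := oisoR.lt_iff_lt.2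
      (show (⟨T j, (hT j hj.le).1⟩ : {p : Ideal Rs // p.IsPrime}) < ⟨T (j + 1), (hT (j + 1) hj).1⟩
        from Subtype.mk_lt_mk.2 (hTc j hj))
    exact Subtype.mk_lt_mk.1 h
  -- build the LTSeries in the prime spectrum
  have hCcstrict : StrictMono
      (fun j : Fin (N + 1) => (⟨Cc j, hCcprime j (by omega)⟩ : PrimeSpectrum R)) := by
    rw [Fin.strictMono_iff_lt_succ]
    intro i
    have hlt : Cc i < Cc (i + 1) := hCcchain i i.isLt
    simp only [Fin.coe_castSucc, Fin.val_succ]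
    exact lt_of_le_of_ne ((PrimeSpectrum.asIdeal_le_asIdeal _ _).1 hlt.le)
      (fun hEq => hlt.ne (congrArg PrimeSpectrum.asIdeal hEq))
  let ch : LTSeries (PrimeSpectrum R) :=
    LTSeries.mk N (fun j : Fin (N + 1) => (⟨Cc j, hCcprime j (by omega)⟩ : PrimeSpectrum R))
      hCcstrict
  have hlen := Order.LTSeries.length_le_krullDim ch
  have hNch : ch.length = N := rfl
  rw [hNch] at hlen
  rw [ringKrullDim]
  exact hlen

open MvPolynomial in
/-- Let `V, W ⊆ ℂⁿ` be affine varieties (zero sets of finitely many polynomials), with `V`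
irreducible (its vanishing ideal is prime) of dimension `d` (the Krull dimension of its
coordinate ring is `d`), and let `π : ℂⁿ → ℂᵈ` be the projection onto `d` fixed
coordinates (given by an injection `ι : Fin d ↪ Fin n`). If `π(V ∩ W)` contains a
non-empty Euclidean open subset of `ℂᵈ`, then `V ⊆ W`. -/
theorem projection_open_implies_contained (n d : ℕ)
    (S T : Finset (MvPolynomial (Fin n) ℂ))
    (V W : Set (Fin n → ℂ))
    (hV : V = {x : Fin n → ℂ | ∀ p ∈ S, MvPolynomial.eval x p = 0})
    (hW : W = {x : Fin n → ℂ | ∀ p ∈ T, MvPolynomial.eval x p = 0})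
    (hirr : (MvPolynomial.vanishingIdeal ℂ V).IsPrime)
    (hdim : ringKrullDim
      (MvPolynomial (Fin n) ℂ ⧸ MvPolynomial.vanishingIdeal ℂ V) = (d : WithBot (WithTop ℕ)))
    (ι : Fin d → Fin n) (hι : Function.Injective ι)
    (O : Set (Fin d → ℂ)) (hO : IsOpen O) (hOne : O.Nonempty)
    (hOsub : O ⊆ (fun x : Fin n → ℂ => x ∘ ι) '' (V ∩ W)) :
    V ⊆ W := by
  classical
  set I : Ideal (MvPolynomial (Fin n) ℂ) := MvPolynomial.vanishingIdeal ℂ V with hI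
  haveI : I.IsPrime := hirr
  set R := MvPolynomial (Fin n) ℂ ⧸ I with hR
  haveI : IsDomain R := Ideal.Quotient.isDomain I
  set mkA : MvPolynomial (Fin n) ℂ →ₐ[ℂ] R := Ideal.Quotient.mkₐ ℂ I with hmkA
  have hmk0 : ∀ q : MvPolynomial (Fin n) ℂ, mkA q = 0 ↔ q ∈ I := by
    intro q
    constructor
    · intro h
      exact (Ideal.Quotient.eq_zero_iff_mem).1 h
    · intro h
      exact (Ideal.Quotient.eq_zero_iff_mem).2 h
  set z : Fin d → R := fun j => mkA (X (ι j)) with hz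
  -- any alg hom composite computation
  have haev : ∀ q : MvPolynomial (Fin d) ℂ, MvPolynomial.aeval z q = mkA (rename ι q) := by
    intro q
    have h1 : (mkA.comp (rename ι) : MvPolynomial (Fin d) ℂ →ₐ[ℂ] R) q
        = MvPolynomial.aeval (fun j => mkA (X (ι j))) q := by
      rw [aeval_unique (mkA.comp (rename ι))]
      congr 1
      ext j
      simp [hmkA]
    simpa using h1.symm
  -- vanishing on V of members of I
  have hvan : ∀ q ∈ I, ∀ x ∈ V, MvPolynomial.eval x q = 0 := by
    intro q hq x hx
    exact (MvPolynomial.mem_vanishingIdeal_iff).1 hq x hx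
  -- the coordinates are algebraically independent
  have hzind : AlgebraicIndependent ℂ z := by
    rw [algebraicIndependent_iff]
    intro q hq
    rw [haev q, hmk0] at hq
    apply aux_eval_zero_on_open hO hOne
    intro y hy
    obtain ⟨x, ⟨hxV, hxW⟩, rfl⟩ := hOsub hy
    have := hvan _ hq x hxV
    rwa [MvPolynomial.eval_rename] at this
  -- key claim: every element of T vanishes on V
  have key : ∀ p ∈ T, p ∈ I := by
    intro p hpT
    set pb : R := mkA p with hpb
    by_contra hpI
    have hpb0 : pb ≠ 0 := fun h => hpI ((hmk0 p).1 h)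
    -- pb is algebraic over the adjoin of the coordinates
    have halg : IsAlgebraic (Algebra.adjoin ℂ (Set.range z)) pb := by
      by_contra htrans
      have hopt : AlgebraicIndependent ℂ (fun o : Option (Fin d) => o.elim pb z) :=
        (hzind.option_iff_transcendental pb).2 htrans
      -- reindex by Fin (d+1) and contradict the dimension
      have hzd1 : AlgebraicIndependent ℂ
          ((fun o : Option (Fin d) => o.elim pb z) ∘ (finSuccEquiv d : Fin (d+1) ≃ Option (Fin d))) := by
        exact hopt.comp _ (Equiv.injective _)
      have hgen : Algebra.adjoin ℂ (Set.range (fun i : Fin n => mkA (X i))) = ⊤ := by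
        have h1 := AlgHom.map_adjoin mkA (Set.range (X : Fin n → MvPolynomial (Fin n) ℂ))
        rw [MvPolynomial.adjoin_range_X, ← Set.range_comp] at h1
        have h2 : Subalgebra.map mkA ⊤ = ⊤ := by
          rw [Algebra.map_top, AlgHom.range_eq_top]
          exact Ideal.Quotient.mkₐ_surjective ℂ I
        rw [h2] at h1
        have h3 : (mkA ∘ (X : Fin n → MvPolynomial (Fin n) ℂ)) = fun i : Fin n => mkA (X i) := rfl
        rw [h3] at h1
        exact h1.symm
      have hle := aux_le_krullDim (fun i : Fin n => mkA (X i)) hgen _ hzd1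
      rw [hdim] at hle
      -- (d+1 : _) ≤ d is absurd
      have habs : ¬ ((d + 1 : ℕ) : WithBot (WithTop ℕ)) ≤ ((d : ℕ) : WithBot (WithTop ℕ)) := by
        have h4 : ((d : ℕ) : WithBot (WithTop ℕ)) < ((d + 1 : ℕ) : WithBot (WithTop ℕ)) := by
          exact_mod_cast Nat.lt_succ_self d
        exact not_le_of_gt h4
      exact habs hle
    obtain ⟨Fp, hFp0, hFpev⟩ := halg
    -- reduce to nonzero constant coefficient
    have main : ∀ k (G : Polynomial (Algebra.adjoin ℂ (Set.range z))), G.natDegree ≤ k → G ≠ 0 →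
        Polynomial.aeval pb G = 0 →
        ∃ a₀ : Algebra.adjoin ℂ (Set.range z), a₀ ≠ 0 ∧ ∃ h : R, (a₀ : R) + pb * h = 0 := by
      intro k
      induction k with
      | zero =>
          intro G hdeg hG0 hGev
          exfalso
          have : G = Polynomial.C (G.coeff 0) := Polynomial.eq_C_of_natDegree_eq_zero (by omega)
          rw [this] at hGev
          rw [Polynomial.aeval_C] at hGev
          have hc0 : G.coeff 0 ≠ 0 := fun h => hG0 (by rw [this, h, map_zero])
          apply hc0
          have h4 : ((G.coeff 0 : Algebra.adjoin ℂ (Set.range z)) : R) = 0 := hGev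
          exact ZeroMemClass.coe_eq_zero.mp h4
      | succ k ih =>
          intro G hdeg hG0 hGev
          by_cases hc : G.coeff 0 = 0
          · have hGX : Polynomial.X * G.divX = G := by
              have := Polynomial.X_mul_divX_add G
              rw [hc, map_zero, add_zero] at this
              exact this
            have hdvx : pb * Polynomial.aeval pb G.divX = 0 := by
              have h9 := congrArg (Polynomial.aeval pb) hGX
              rw [map_mul, Polynomial.aeval_X, hGev] at h9
              exact h9
            have hdvx0 : Polynomial.aeval pb G.divX = 0 := by
              rcases mul_eq_zero.1 hdvx with h | h
              · exact absurd h hpb0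
              · exact h
            have hdivX0 : G.divX ≠ 0 := by
              intro h
              apply hG0
              rw [← hGX, h, mul_zero]
            have hdegX : G.divX.natDegree ≤ k := by
              have h5 := Polynomial.natDegree_divX_eq_natDegree_tsub_one (p := G)
              omega
            exact ih G.divX hdegX hdivX0 hdvx0
          · refine ⟨G.coeff 0, hc, Polynomial.aeval pb G.divX, ?_⟩
            have hGX : Polynomial.X * G.divX + Polynomial.C (G.coeff 0) = G :=
              Polynomial.X_mul_divX_add G
            have h7 := congrArg (Polynomial.aeval pb) hGX
            rw [map_add, map_mul, Polynomial.aeval_X, Polynomial.aeval_C, hGev] at h7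
            calc ((G.coeff 0 : Algebra.adjoin ℂ (Set.range z)) : R) + pb * Polynomial.aeval pb G.divX
                = pb * Polynomial.aeval pb G.divX
                  + algebraMap (Algebra.adjoin ℂ (Set.range z)) R (G.coeff 0) := by
                  rw [add_comm]
                  rfl
            _ = 0 := h7
    obtain ⟨a₀, ha₀, h, hrel⟩ := main Fp.natDegree Fp le_rfl hFp0 hFpev
    -- a₀ comes from a polynomial in d variables
    have hmem : (a₀ : R) ∈ Algebra.adjoin ℂ (Set.range z) := a₀.2
    have hmem2 : (a₀ : R) ∈ (MvPolynomial.aeval z : MvPolynomial (Fin d) ℂ →ₐ[ℂ] R).range :=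
      (SetLike.ext_iff.mp (Algebra.adjoin_range_eq_range_aeval ℂ z) _).mp hmem
    obtain ⟨q, hq⟩ := hmem2
    have hq' : MvPolynomial.aeval z q = (a₀ : R) := hq
    have hq0 : q ≠ 0 := by
      intro h
      apply ha₀
      have h8 : (a₀ : R) = 0 := by rw [← hq', h, map_zero]
      exact_mod_cast ZeroMemClass.coe_eq_zero.mp h8
    obtain ⟨h', hh'⟩ := Ideal.Quotient.mk_surjective (I := I) h
    have hmemI : rename ι q + p * h' ∈ I := by
      refine (hmk0 _).1 ?_
      rw [map_add, map_mul]
      have h1 : mkA (rename ι q) = (a₀ : R) := by rw [← haev, hq']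
      have h2 : mkA p = pb := rfl
      have h3 : mkA h' = h := hh'
      rw [h1, h2, h3]
      exact hrel
    have hqzero : q = 0 := by
      apply aux_eval_zero_on_open hO hOne
      intro y hy
      obtain ⟨x, ⟨hxV, hxW⟩, rfl⟩ := hOsub hy
      have hev := hvan _ hmemI x hxV
      rw [map_add, map_mul, MvPolynomial.eval_rename] at hev
      have hpx : MvPolynomial.eval x p = 0 := by
        rw [hW] at hxW
        exact hxW p hpT
      rw [hpx, zero_mul, add_zero] at hev
      exact hev
    exact hq0 hqzero
  -- conclude
  intro x hxV
  rw [hW]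
  intro p hpT
  exact hvan p (key p hpT) x hxV
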